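/- arXiv:0803.0508 — 5 statements merged into one kernel-verified Lean document; each statement's English description precedes it below -/
import Mathlib

section
/- The matrix A = [[0,1,1],[1,0,1],[1,1,0]] has determinant 2, and the rhombic dodecahedron Ω = {x ∈ ℝ³ : -1 < x_j ± x_i ≤ 1 for all 1 ≤ i < j ≤ 3} tiles ℝ³ by translations by the lattice A·ℤ³; that is, for every x ∈ ℝ³ there exists a unique k ∈ ℤ³ with x - A·k ∈ Ω. -/
open Matrix

/-- Generator matrix of the fcc lattice. -/
def fccA : Matrix (Fin 3) (Fin 3) ℝ := !![0,1,1;1,0,1;1,1,0]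

/-- Half-open rhombic dodecahedron. -/
def rhombicDodec : Set (Fin 3 → ℝ) :=
  {x | ∀ i j : Fin 3, i < j →
    (-1 < x j - x i ∧ x j - x i ≤ 1 ∧ -1 < x j + x i ∧ x j + x i ≤ 1)}

/-- The reduced condition in "sum coordinates". -/
def FccGood (a b c : ℝ) (m n p : ℤ) : Prop :=
  (-1 < a - m ∧ a - m ≤ 1) ∧ (-1 < b - n ∧ b - n ≤ 1) ∧ (-1 < c - p ∧ c - p ≤ 1) ∧
  (-1 < (b - n) - (a - m) ∧ (b - n) - (a - m) ≤ 1) ∧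
  (-1 < (c - p) - (a - m) ∧ (c - p) - (a - m) ≤ 1) ∧
  (-1 < (c - p) - (b - n) ∧ (c - p) - (b - n) ≤ 1)

lemma fcc_good_exists (a b c : ℝ) :
    ∃ m n p : ℤ, (4:ℤ) ∣ (m + n + p) ∧ FccGood a b c m n p := by
  set M := ⌈a⌉ with hMdef
  set N := ⌈b⌉ with hNdef
  set P := ⌈c⌉ with hPdef
  have ha1 : a ≤ (M:ℝ) := Int.le_ceil a
  have ha2 : (M:ℝ) < a + 1 := Int.ceil_lt_add_one a
  have hb1 : b ≤ (N:ℝ) := Int.le_ceil b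
  have hb2 : (N:ℝ) < b + 1 := Int.ceil_lt_add_one b
  have hc1 : c ≤ (P:ℝ) := Int.le_ceil c
  have hc2 : (P:ℝ) < c + 1 := Int.ceil_lt_add_one c
  have h4 : (M+N+P) % 4 = 0 ∨ (M+N+P) % 4 = 1 ∨ (M+N+P) % 4 = 2 ∨ (M+N+P) % 4 = 3 := by
    omega
  rcases h4 with h | h | h | h
  · refine ⟨M, N, P, by omega, ?_⟩
    unfold FccGood
    refine ⟨⟨?_,?_⟩,⟨?_,?_⟩,⟨?_,?_⟩,⟨?_,?_⟩,⟨?_,?_⟩,⟨?_,?_⟩⟩ <;> linarith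
  · by_cases h1 : c - P ≤ b - N ∧ c - P ≤ a - M
    · refine ⟨M, N, P - 1, by omega, ?_⟩
      unfold FccGood; push_cast
      refine ⟨⟨?_,?_⟩,⟨?_,?_⟩,⟨?_,?_⟩,⟨?_,?_⟩,⟨?_,?_⟩,⟨?_,?_⟩⟩ <;> linarith [h1.1, h1.2]
    · have hdisj : b - (N:ℝ) < c - P ∨ a - (M:ℝ) < c - P := by
        by_contra hc'
        push_neg at hc'
        exact h1 ⟨hc'.1, hc'.2⟩
      by_cases h2 : b - (N:ℝ) ≤ a - M
      · refine ⟨M, N - 1, P, by omega, ?_⟩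
        unfold FccGood; push_cast
        rcases hdisj with h3 | h3 <;>
          refine ⟨⟨?_,?_⟩,⟨?_,?_⟩,⟨?_,?_⟩,⟨?_,?_⟩,⟨?_,?_⟩,⟨?_,?_⟩⟩ <;> linarith
      · push_neg at h2
        refine ⟨M - 1, N, P, by omega, ?_⟩
        unfold FccGood; push_cast
        rcases hdisj with h3 | h3 <;>
          refine ⟨⟨?_,?_⟩,⟨?_,?_⟩,⟨?_,?_⟩,⟨?_,?_⟩,⟨?_,?_⟩,⟨?_,?_⟩⟩ <;> linarith
  · by_cases h1 : b - (N:ℝ) ≤ a - M ∧ c - (P:ℝ) ≤ a - M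
    · refine ⟨M, N - 1, P - 1, by omega, ?_⟩
      unfold FccGood; push_cast
      refine ⟨⟨?_,?_⟩,⟨?_,?_⟩,⟨?_,?_⟩,⟨?_,?_⟩,⟨?_,?_⟩,⟨?_,?_⟩⟩ <;> linarith [h1.1, h1.2]
    · have hdisj : a - (M:ℝ) < b - N ∨ a - (M:ℝ) < c - P := by
        by_contra hc'
        push_neg at hc'
        exact h1 ⟨hc'.1, hc'.2⟩
      by_cases h2 : c - (P:ℝ) ≤ b - N
      · refine ⟨M - 1, N, P - 1, by omega, ?_⟩
        unfold FccGood; push_cast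
        rcases hdisj with h3 | h3 <;>
          refine ⟨⟨?_,?_⟩,⟨?_,?_⟩,⟨?_,?_⟩,⟨?_,?_⟩,⟨?_,?_⟩,⟨?_,?_⟩⟩ <;> linarith
      · push_neg at h2
        refine ⟨M - 1, N - 1, P, by omega, ?_⟩
        unfold FccGood; push_cast
        rcases hdisj with h3 | h3 <;>
          refine ⟨⟨?_,?_⟩,⟨?_,?_⟩,⟨?_,?_⟩,⟨?_,?_⟩,⟨?_,?_⟩,⟨?_,?_⟩⟩ <;> linarith
  · refine ⟨M - 1, N - 1, P - 1, by omega, ?_⟩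
    unfold FccGood; push_cast
    refine ⟨⟨?_,?_⟩,⟨?_,?_⟩,⟨?_,?_⟩,⟨?_,?_⟩,⟨?_,?_⟩,⟨?_,?_⟩⟩ <;> linarith

lemma fcc_good_unique (a b c : ℝ) {m n p m' n' p' : ℤ}
    (h : FccGood a b c m n p) (h' : FccGood a b c m' n' p')
    (hd : (4:ℤ) ∣ m + n + p) (hd' : (4:ℤ) ∣ m' + n' + p') :
    m = m' ∧ n = n' ∧ p = p' := by
  obtain ⟨⟨a1,a2⟩,⟨b1,b2⟩,⟨c1,c2⟩,⟨d1,d2⟩,⟨e1,e2⟩,⟨f1,f2⟩⟩ := h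
  obtain ⟨⟨a1',a2'⟩,⟨b1',b2'⟩,⟨c1',c2'⟩,⟨d1',d2'⟩,⟨e1',e2'⟩,⟨f1',f2'⟩⟩ := h'
  have E1 : (-2:ℤ) < m' - m ∧ (m' - m : ℤ) < 2 := by
    have hr : (-2:ℝ) < (m':ℝ) - (m:ℝ) ∧ (m':ℝ) - (m:ℝ) < 2 := ⟨by linarith, by linarith⟩
    exact_mod_cast hr
  have E2 : (-2:ℤ) < n' - n ∧ (n' - n : ℤ) < 2 := by
    have hr : (-2:ℝ) < (n':ℝ) - (n:ℝ) ∧ (n':ℝ) - (n:ℝ) < 2 := ⟨by linarith, by linarith⟩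
    exact_mod_cast hr
  have E3 : (-2:ℤ) < p' - p ∧ (p' - p : ℤ) < 2 := by
    have hr : (-2:ℝ) < (p':ℝ) - (p:ℝ) ∧ (p':ℝ) - (p:ℝ) < 2 := ⟨by linarith, by linarith⟩
    exact_mod_cast hr
  have E4 : (-2:ℤ) < (m - m') - (n - n') ∧ ((m - m') - (n - n') : ℤ) < 2 := by
    have hr : (-2:ℝ) < ((m:ℝ) - m') - ((n:ℝ) - n') ∧ ((m:ℝ) - m') - ((n:ℝ) - n') < 2 :=
      ⟨by linarith, by linarith⟩
    exact_mod_cast hr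
  have E5 : (-2:ℤ) < (m - m') - (p - p') ∧ ((m - m') - (p - p') : ℤ) < 2 := by
    have hr : (-2:ℝ) < ((m:ℝ) - m') - ((p:ℝ) - p') ∧ ((m:ℝ) - m') - ((p:ℝ) - p') < 2 :=
      ⟨by linarith, by linarith⟩
    exact_mod_cast hr
  have E6 : (-2:ℤ) < (n - n') - (p - p') ∧ ((n - n') - (p - p') : ℤ) < 2 := by
    have hr : (-2:ℝ) < ((n:ℝ) - n') - ((p:ℝ) - p') ∧ ((n:ℝ) - n') - ((p:ℝ) - p') < 2 :=
      ⟨by linarith, by linarith⟩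
    exact_mod_cast hr
  omega

lemma fcc_key (a b c : ℝ) :
    ∃! mnp : ℤ × ℤ × ℤ, ((4:ℤ) ∣ (mnp.1 + mnp.2.1 + mnp.2.2)) ∧
      FccGood a b c mnp.1 mnp.2.1 mnp.2.2 := by
  obtain ⟨m, n, p, hd, hg⟩ := fcc_good_exists a b c
  refine ⟨(m, n, p), ⟨hd, hg⟩, ?_⟩
  rintro ⟨m', n', p'⟩ ⟨hd', hg'⟩
  obtain ⟨q1, q2, q3⟩ := fcc_good_unique a b c hg' hg hd' hd
  simp only [Prod.mk.injEq]
  exact ⟨q1, q2, q3⟩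

lemma fcc_mem_iff (x : Fin 3 → ℝ) (k : Fin 3 → ℤ) :
    (x - fccA.mulVec (fun i => (k i : ℝ))) ∈ rhombicDodec ↔
    FccGood (x 0 + x 1) (x 0 + x 2) (x 1 + x 2)
      (k 0 + k 1 + 2*k 2) (k 0 + 2*k 1 + k 2) (2*k 0 + k 1 + k 2) := by
  have h0 : (x - fccA.mulVec (fun i => (k i : ℝ))) 0 = x 0 - ((k 1 : ℝ) + k 2) := by
    simp [fccA, Matrix.mulVec, dotProduct, Fin.sum_univ_three]
  have h1 : (x - fccA.mulVec (fun i => (k i : ℝ))) 1 = x 1 - ((k 0 : ℝ) + k 2) := by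
    simp [fccA, Matrix.mulVec, dotProduct, Fin.sum_univ_three]
  have h2 : (x - fccA.mulVec (fun i => (k i : ℝ))) 2 = x 2 - ((k 0 : ℝ) + k 1) := by
    simp [fccA, Matrix.mulVec, dotProduct, Fin.sum_univ_three]
  constructor
  · intro h
    have h01 := h 0 1 (by decide)
    have h02 := h 0 2 (by decide)
    have h12 := h 1 2 (by decide)
    rw [h0, h1] at h01
    rw [h0, h2] at h02
    rw [h1, h2] at h12
    unfold FccGood
    push_cast
    refine ⟨⟨?_,?_⟩,⟨?_,?_⟩,⟨?_,?_⟩,⟨?_,?_⟩,⟨?_,?_⟩,⟨?_,?_⟩⟩ <;>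
      [linarith [h01.2.2.1]; linarith [h01.2.2.2]; linarith [h02.2.2.1]; linarith [h02.2.2.2];
       linarith [h12.2.2.1]; linarith [h12.2.2.2]; linarith [h12.1]; linarith [h12.2.1];
       linarith [h02.1]; linarith [h02.2.1]; linarith [h01.1]; linarith [h01.2.1]]
  · intro h
    unfold FccGood at h
    push_cast at h
    obtain ⟨⟨a1,a2⟩,⟨b1,b2⟩,⟨c1,c2⟩,⟨d1,d2⟩,⟨e1,e2⟩,⟨f1,f2⟩⟩ := h
    set y := x - fccA.mulVec (fun i => (k i : ℝ)) with hy
    have g01 : -1 < y 1 - y 0 ∧ y 1 - y 0 ≤ 1 ∧ -1 < y 1 + y 0 ∧ y 1 + y 0 ≤ 1 := by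
      rw [h0, h1]
      exact ⟨by linarith, by linarith, by linarith, by linarith⟩
    have g02 : -1 < y 2 - y 0 ∧ y 2 - y 0 ≤ 1 ∧ -1 < y 2 + y 0 ∧ y 2 + y 0 ≤ 1 := by
      rw [h0, h2]
      exact ⟨by linarith, by linarith, by linarith, by linarith⟩
    have g12 : -1 < y 2 - y 1 ∧ y 2 - y 1 ≤ 1 ∧ -1 < y 2 + y 1 ∧ y 2 + y 1 ≤ 1 := by
      rw [h1, h2]
      exact ⟨by linarith, by linarith, by linarith, by linarith⟩
    intro i j hij
    fin_cases i <;> fin_cases j <;>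
      first
        | exact absurd hij (by decide)
        | exact g01
        | exact g02
        | exact g12

theorem stmt0 :
    fccA.det = 2 ∧
    ∀ x : Fin 3 → ℝ, ∃! k : Fin 3 → ℤ,
      (x - fccA.mulVec (fun i => (k i : ℝ))) ∈ rhombicDodec := by
  constructor
  · rw [Matrix.det_fin_three]; simp [fccA]; norm_num
  · intro x
    obtain ⟨⟨m, n, p⟩, ⟨hd, hg⟩, huniq⟩ := fcc_key (x 0 + x 1) (x 0 + x 2) (x 1 + x 2)
    obtain ⟨s, hs⟩ := hd
    have hs' : m + n + p = 4 * s := hs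
    have hgood : FccGood (x 0 + x 1) (x 0 + x 2) (x 1 + x 2) m n p := hg
    refine ⟨![p - s, n - s, m - s], ?_, ?_⟩
    · refine (fcc_mem_iff x ![p - s, n - s, m - s]).mpr ?_
      have v0 : (![p - s, n - s, m - s] : Fin 3 → ℤ) 0 = p - s := rfl
      have v1 : (![p - s, n - s, m - s] : Fin 3 → ℤ) 1 = n - s := rfl
      have v2 : (![p - s, n - s, m - s] : Fin 3 → ℤ) 2 = m - s := rfl
      rw [v0, v1, v2]
      have q1 : (p - s) + (n - s) + 2*(m - s) = m := by omega
      have q2 : (p - s) + 2*(n - s) + (m - s) = n := by omega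
      have q3 : 2*(p - s) + (n - s) + (m - s) = p := by omega
      rw [q1, q2, q3]
      exact hgood
    · intro k' hk'
      rw [fcc_mem_iff] at hk'
      have h2 := huniq (k' 0 + k' 1 + 2*k' 2, k' 0 + 2*k' 1 + k' 2, 2*k' 0 + k' 1 + k' 2)
        ⟨⟨k' 0 + k' 1 + k' 2, by ring⟩, hk'⟩
      simp only [Prod.mk.injEq] at h2
      obtain ⟨q1, q2, q3⟩ := h2
      funext i
      fin_cases i
      · show k' 0 = p - s
        omega
      · show k' 1 = n - s
        omega
      · show k' 2 = m - s
        omega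
end

section
/- Let ℝ⁴_H = {t ∈ ℝ⁴ : t₁+t₂+t₃+t₄ = 0} and Ω_H = {t ∈ ℝ⁴_H : -1 < t_i - t_j ≤ 1 for all 1 ≤ i < j ≤ 4}. If t, s ∈ Ω_H and s - t ∈ ℤ⁴ (hence s - t ∈ ℤ⁴ ∩ ℝ⁴_H), then t = s. -/
/-- The half-open rhombic dodecahedron in homogeneous coordinates. -/
def OmegaH : Set (Fin 4 → ℝ) :=
  {t | (∑ i, t i) = 0 ∧ ∀ i j : Fin 4, i < j → (-1 < t i - t j ∧ t i - t j ≤ 1)}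

theorem stmt2 (t s : Fin 4 → ℝ) (ht : t ∈ OmegaH) (hs : s ∈ OmegaH)
    (hint : ∀ i, ∃ m : ℤ, s i - t i = (m : ℝ)) : t = s := by
  obtain ⟨hts, htd⟩ := ht
  obtain ⟨hss, hsd⟩ := hs
  choose m hm using hint
  rw [Fin.sum_univ_four] at hts hss
  have hsum : m 0 + m 1 + m 2 + m 3 = 0 := by
    have : ((m 0 + m 1 + m 2 + m 3 : ℤ) : ℝ) = 0 := by
      push_cast
      linarith [hm 0, hm 1, hm 2, hm 3]
    exact_mod_cast this
  have key : ∀ i j : Fin 4, i < j → -1 ≤ m i - m j ∧ m i - m j ≤ 1 := by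
    intro i j hij
    obtain ⟨ht1, ht2⟩ := htd i j hij
    obtain ⟨hs1, hs2⟩ := hsd i j hij
    have h1 : ((m i - m j : ℤ) : ℝ) < 2 := by
      push_cast; linarith [hm i, hm j]
    have h2 : (-2 : ℝ) < ((m i - m j : ℤ) : ℝ) := by
      push_cast; linarith [hm i, hm j]
    have h1' : m i - m j < 2 := by exact_mod_cast h1
    have h2' : (-2 : ℤ) < m i - m j := by exact_mod_cast h2
    omega
  have k01 := key 0 1 (by decide)
  have k02 := key 0 2 (by decide)
  have k03 := key 0 3 (by decide)
  have k12 := key 1 2 (by decide)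
  have k13 := key 1 3 (by decide)
  have k23 := key 2 3 (by decide)
  have hz : m 0 = 0 ∧ m 1 = 0 ∧ m 2 = 0 ∧ m 3 = 0 := by omega
  funext i
  have hmi := hm i
  have hzi : m i = 0 := by fin_cases i <;> simp_all
  rw [hzi] at hmi
  push_cast at hmi
  linarith
end

section
/- Let ℍ = {k ∈ ℤ⁴ : k₁+k₂+k₃+k₄=0 and k₁ ≡ k₂ ≡ k₃ ≡ k₄ (mod 4)} and φ_j(t) = exp((πi/2) j·t) for j ∈ ℍ. Then for any j, k ∈ ℍ, (1/2) ∫_{Ω_H} φ_k(t) conj(φ_j(t)) dt = δ_{k,j}, where the integral is over the rhombic dodecahedron Ω_H ⊂ ℝ⁴_H with respect to three-dimensional Lebesgue measure (in coordinates t₁,t₂,t₃), and |Ω_H| = 2. -/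
open Real MeasureTheory ENNReal

/-- Index set ℍ: integer vectors with zero sum, all coordinates congruent mod 4. -/
def Hidx : Set (Fin 4 → ℤ) :=
  {k | (∑ i, k i) = 0 ∧ ∀ i j : Fin 4, k i % 4 = k j % 4}

/-- The exponential φ_j(t) = exp((πi/2) j·t). -/
noncomputable def phi (j : Fin 4 → ℤ) (t : Fin 4 → ℝ) : ℂ :=
  Complex.exp ((π : ℂ) * Complex.I / 2 * ∑ i, (j i : ℂ) * (t i : ℂ))

/-- Embedding of (t₁,t₂,t₃) into the hyperplane t₁+t₂+t₃+t₄=0. -/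
def emb (u : Fin 3 → ℝ) : Fin 4 → ℝ := ![u 0, u 1, u 2, -(u 0 + u 1 + u 2)]

/-- The rhombic dodecahedron Ω_H in the coordinates (t₁,t₂,t₃). -/
def OmegaH3 : Set (Fin 3 → ℝ) :=
  {u | ∀ i j : Fin 4, i < j → (-1 < emb u i - emb u j ∧ emb u i - emb u j ≤ 1)}


section aux
open Submodule

/-- Half-open system of inequalities defining Ω in coordinates. -/
def Pq (x y z : ℝ) : Prop :=
  (-1 < x - y ∧ x - y ≤ 1) ∧ (-1 < x - z ∧ x - z ≤ 1) ∧ (-1 < y - z ∧ y - z ≤ 1) ∧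
  (-1 < 2*x+y+z ∧ 2*x+y+z ≤ 1) ∧ (-1 < x+2*y+z ∧ x+2*y+z ≤ 1) ∧ (-1 < x+y+2*z ∧ x+y+2*z ≤ 1)

/-- Open (strict) version. -/
def Qq (x y z : ℝ) : Prop :=
  (-1 < x - y ∧ x - y < 1) ∧ (-1 < x - z ∧ x - z < 1) ∧ (-1 < y - z ∧ y - z < 1) ∧
  (-1 < 2*x+y+z ∧ 2*x+y+z < 1) ∧ (-1 < x+2*y+z ∧ x+2*y+z < 1) ∧ (-1 < x+y+2*z ∧ x+y+2*z < 1)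

lemma Qq.toPq {x y z : ℝ} (h : Qq x y z) : Pq x y z := by
  obtain ⟨⟨a1,a2⟩,⟨b1,b2⟩,⟨c1,c2⟩,⟨d1,d2⟩,⟨e1,e2⟩,⟨f1,f2⟩⟩ := h
  exact ⟨⟨a1,a2.le⟩,⟨b1,b2.le⟩,⟨c1,c2.le⟩,⟨d1,d2.le⟩,⟨e1,e2.le⟩,⟨f1,f2.le⟩⟩

lemma Qq.swap01 {x y z : ℝ} (h : Qq x y z) : Qq y x z := by
  obtain ⟨⟨a1,a2⟩,⟨b1,b2⟩,⟨c1,c2⟩,⟨d1,d2⟩,⟨e1,e2⟩,⟨f1,f2⟩⟩ := h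
  refine ⟨⟨?_,?_⟩,⟨?_,?_⟩,⟨?_,?_⟩,⟨?_,?_⟩,⟨?_,?_⟩,⟨?_,?_⟩⟩ <;> linarith

lemma Qq.swap12 {x y z : ℝ} (h : Qq x y z) : Qq x z y := by
  obtain ⟨⟨a1,a2⟩,⟨b1,b2⟩,⟨c1,c2⟩,⟨d1,d2⟩,⟨e1,e2⟩,⟨f1,f2⟩⟩ := h
  refine ⟨⟨?_,?_⟩,⟨?_,?_⟩,⟨?_,?_⟩,⟨?_,?_⟩,⟨?_,?_⟩,⟨?_,?_⟩⟩ <;> linarith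

/-- Core existence lemma for a sorted generic triple in [0,1). -/
lemma core {a b c : ℝ} (hc0 : 0 ≤ c) (ha1 : a < 1) (hab : b < a) (hbc : c < b)
    (g1 : a+b+c+a ≠ 1) (g2 : a+b+c+b ≠ 2) (g3 : a+b+c+c ≠ 3) :
    ∃ e1 e2 e3 : ℤ, Qq (a - e1) (b - e2) (c - e3) := by
  have hb1 : b < 1 := hab.trans ha1
  have hc1 : c < 1 := hbc.trans hb1
  have hb0 : (0:ℝ) < b := lt_of_le_of_lt hc0 hbc
  have ha0 : (0:ℝ) < a := hb0.trans hab
  rcases lt_or_gt_of_ne g1 with h1 | h1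
  · refine ⟨0, 0, 0, ?_⟩
    unfold Qq; push_cast
    refine ⟨⟨?_,?_⟩,⟨?_,?_⟩,⟨?_,?_⟩,⟨?_,?_⟩,⟨?_,?_⟩,⟨?_,?_⟩⟩ <;> linarith
  · rcases lt_or_gt_of_ne g2 with h2 | h2
    · refine ⟨1, 0, 0, ?_⟩
      unfold Qq; push_cast
      refine ⟨⟨?_,?_⟩,⟨?_,?_⟩,⟨?_,?_⟩,⟨?_,?_⟩,⟨?_,?_⟩,⟨?_,?_⟩⟩ <;> linarith
    · rcases lt_or_gt_of_ne g3 with h3 | h3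
      · refine ⟨1, 1, 0, ?_⟩
        unfold Qq; push_cast
        refine ⟨⟨?_,?_⟩,⟨?_,?_⟩,⟨?_,?_⟩,⟨?_,?_⟩,⟨?_,?_⟩,⟨?_,?_⟩⟩ <;> linarith
      · refine ⟨1, 1, 1, ?_⟩
        unfold Qq; push_cast
        refine ⟨⟨?_,?_⟩,⟨?_,?_⟩,⟨?_,?_⟩,⟨?_,?_⟩,⟨?_,?_⟩,⟨?_,?_⟩⟩ <;> linarith

/-- Covering for a generic triple in `[0,1)` (any order). -/
lemma covering_v {a b c : ℝ} (ha : a ∈ Set.Ico (0:ℝ) 1) (hb : b ∈ Set.Ico (0:ℝ) 1)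
    (hc : c ∈ Set.Ico (0:ℝ) 1) (dab : a ≠ b) (dac : a ≠ c) (dbc : b ≠ c)
    (gA : ∀ m : ℤ, a+b+c+a ≠ m) (gB : ∀ m : ℤ, a+b+c+b ≠ m) (gC : ∀ m : ℤ, a+b+c+c ≠ m) :
    ∃ e1 e2 e3 : ℤ, Qq (a - e1) (b - e2) (c - e3) := by
  obtain ⟨ha0, ha1⟩ := ha
  obtain ⟨hb0, hb1⟩ := hb
  obtain ⟨hc0, hc1⟩ := hc
  have gA1 : a+b+c+a ≠ 1 := by simpa using gA 1
  have gA2 : a+b+c+a ≠ 2 := by simpa using gA 2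
  have gA3 : a+b+c+a ≠ 3 := by simpa using gA 3
  have gB1 : a+b+c+b ≠ 1 := by simpa using gB 1
  have gB2 : a+b+c+b ≠ 2 := by simpa using gB 2
  have gB3 : a+b+c+b ≠ 3 := by simpa using gB 3
  have gC1 : a+b+c+c ≠ 1 := by simpa using gC 1
  have gC2 : a+b+c+c ≠ 2 := by simpa using gC 2
  have gC3 : a+b+c+c ≠ 3 := by simpa using gC 3
  rcases lt_or_gt_of_ne dab with h1 | h1
  · rcases lt_or_gt_of_ne dac with h2 | h2
    · rcases lt_or_gt_of_ne dbc with h3 | h3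
      · -- a < b < c : sorted desc (c, b, a)
        obtain ⟨e1, e2, e3, hq⟩ := core ha0 hc1 h3 h1 (fun h => gC1 (by linarith))
          (fun h => gB2 (by linarith)) (fun h => gA3 (by linarith))
        exact ⟨e3, e2, e1, hq.swap01.swap12.swap01⟩
      · -- a < c < b : sorted (b, c, a)
        obtain ⟨e1, e2, e3, hq⟩ := core ha0 hb1 h3 h2 (fun h => gB1 (by linarith))
          (fun h => gC2 (by linarith)) (fun h => gA3 (by linarith))
        exact ⟨e3, e1, e2, hq.swap12.swap01⟩
    · rcases lt_or_gt_of_ne dbc with h3 | h3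
      · -- a < b, c < a, b < c : impossible
        exact absurd (h1.trans h3) (lt_asymm h2)
      · -- c < a < b : sorted (b, a, c)
        obtain ⟨e1, e2, e3, hq⟩ := core hc0 hb1 h1 h2 (fun h => gB1 (by linarith))
          (fun h => gA2 (by linarith)) (fun h => gC3 (by linarith))
        exact ⟨e2, e1, e3, hq.swap01⟩
  · rcases lt_or_gt_of_ne dac with h2 | h2
    · rcases lt_or_gt_of_ne dbc with h3 | h3
      · -- b < a < c : sorted (c, a, b)
        obtain ⟨e1, e2, e3, hq⟩ := core hb0 hc1 h2 h1 (fun h => gC1 (by linarith))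
          (fun h => gA2 (by linarith)) (fun h => gB3 (by linarith))
        exact ⟨e2, e3, e1, hq.swap01.swap12⟩
      · -- b < a, a < c, c < b : impossible
        exact absurd (h2.trans h3) (lt_asymm h1)
    · rcases lt_or_gt_of_ne dbc with h3 | h3
      · -- b < c < a : sorted (a, c, b)
        obtain ⟨e1, e2, e3, hq⟩ := core hb0 ha1 h2 h3 (fun h => gA1 (by linarith))
          (fun h => gC2 (by linarith)) (fun h => gB3 (by linarith))
        exact ⟨e1, e3, e2, hq.swap12⟩
      · -- c < b < a : sorted (a, b, c)
        obtain ⟨e1, e2, e3, hq⟩ := core hc0 ha1 h1 h3 gA1 gB2 gC3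
        exact ⟨e1, e2, e3, hq⟩

/-- Uniqueness: translates of Ω by distinct integer vectors are disjoint. -/
lemma uniq_int {x y z : ℝ} {a b c : ℤ} (h1 : Pq x y z) (h2 : Pq (x+a) (y+b) (z+c)) :
    a = 0 ∧ b = 0 ∧ c = 0 := by
  obtain ⟨⟨a1,a2⟩,⟨b1,b2⟩,⟨c1,c2⟩,⟨d1,d2⟩,⟨e1,e2⟩,⟨f1,f2⟩⟩ := h1
  obtain ⟨⟨a1',a2'⟩,⟨b1',b2'⟩,⟨c1',c2'⟩,⟨d1',d2'⟩,⟨e1',e2'⟩,⟨f1',f2'⟩⟩ := h2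
  have h3 : ((a:ℝ) - b) < 2 := by linarith
  have h4 : (-2:ℝ) < (a:ℝ) - b := by linarith
  have h5 : ((a:ℝ) - c) < 2 := by linarith
  have h6 : (-2:ℝ) < (a:ℝ) - c := by linarith
  have h7 : ((b:ℝ) - c) < 2 := by linarith
  have h8 : (-2:ℝ) < (b:ℝ) - c := by linarith
  have h9 : ((2*a+b+c:ℤ):ℝ) < 2 := by push_cast; linarith
  have h10 : (-2:ℝ) < ((2*a+b+c:ℤ):ℝ) := by push_cast; linarith
  have h11 : ((a+2*b+c:ℤ):ℝ) < 2 := by push_cast; linarith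
  have h12 : (-2:ℝ) < ((a+2*b+c:ℤ):ℝ) := by push_cast; linarith
  have h13 : ((a+b+2*c:ℤ):ℝ) < 2 := by push_cast; linarith
  have h14 : (-2:ℝ) < ((a+b+2*c:ℤ):ℝ) := by push_cast; linarith
  have i3 : (a:ℤ) - b < 2 := by exact_mod_cast h3
  have i4 : (-2:ℤ) < a - b := by exact_mod_cast h4
  have i5 : (a:ℤ) - c < 2 := by exact_mod_cast h5
  have i6 : (-2:ℤ) < a - c := by exact_mod_cast h6
  have i7 : (b:ℤ) - c < 2 := by exact_mod_cast h7
  have i8 : (-2:ℤ) < b - c := by exact_mod_cast h8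
  have i9 : (2*a+b+c:ℤ) < 2 := by exact_mod_cast h9
  have i10 : (-2:ℤ) < 2*a+b+c := by exact_mod_cast h10
  have i11 : (a+2*b+c:ℤ) < 2 := by exact_mod_cast h11
  have i12 : (-2:ℤ) < a+2*b+c := by exact_mod_cast h12
  have i13 : (a+b+2*c:ℤ) < 2 := by exact_mod_cast h13
  have i14 : (-2:ℤ) < a+b+2*c := by exact_mod_cast h14
  omega

lemma mem_omega_iff (u : Fin 3 → ℝ) : u ∈ OmegaH3 ↔ Pq (u 0) (u 1) (u 2) := by
  constructor
  · intro h
    have h01 := h 0 1 (by decide)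
    have h02 := h 0 2 (by decide)
    have h12 := h 1 2 (by decide)
    have h03 := h 0 3 (by decide)
    have h13 := h 1 3 (by decide)
    have h23 := h 2 3 (by decide)
    simp only [emb, Matrix.cons_val_zero, Matrix.cons_val_one, Matrix.head_cons,
      Matrix.cons_val_two, Matrix.tail_cons, Matrix.cons_val_three] at h01 h02 h12 h03 h13 h23
    refine ⟨⟨by linarith [h01.1], by linarith [h01.2]⟩, ⟨by linarith [h02.1], by linarith [h02.2]⟩,
      ⟨by linarith [h12.1], by linarith [h12.2]⟩, ⟨by linarith [h03.1], by linarith [h03.2]⟩,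
      ⟨by linarith [h13.1], by linarith [h13.2]⟩, ⟨by linarith [h23.1], by linarith [h23.2]⟩⟩
  · intro h i j hij
    obtain ⟨⟨a1,a2⟩,⟨b1,b2⟩,⟨c1,c2⟩,⟨d1,d2⟩,⟨e1,e2⟩,⟨f1,f2⟩⟩ := h
    fin_cases i <;> fin_cases j <;>
      simp_all [emb] <;>
      constructor <;> linarith

lemma measurable_pq : MeasurableSet {u : Fin 3 → ℝ | Pq (u 0) (u 1) (u 2)} := by
  simp only [Pq, Set.setOf_and]
  have m0 : Measurable fun u : Fin 3 → ℝ => u 0 := measurable_pi_apply 0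
  have m1 : Measurable fun u : Fin 3 → ℝ => u 1 := measurable_pi_apply 1
  have m2 : Measurable fun u : Fin 3 → ℝ => u 2 := measurable_pi_apply 2
  repeat' apply MeasurableSet.inter
  all_goals
    first
    | exact measurableSet_lt measurable_const (by fun_prop)
    | exact measurableSet_le (by fun_prop) measurable_const

noncomputable abbrev bb : Module.Basis (Fin 3) ℝ (Fin 3 → ℝ) := Pi.basisFun ℝ (Fin 3)
abbrev Lat3 : AddSubgroup (Fin 3 → ℝ) := (span ℤ (Set.range bb)).toAddSubgroup

instance : Countable Lat3 := by
  have : Countable (span ℤ (Set.range bb)) := inferInstance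
  exact this

lemma mem_Lat3 (x : Fin 3 → ℝ) : x ∈ Lat3 ↔ ∀ i, ∃ m : ℤ, x i = m := by
  rw [Submodule.mem_toAddSubgroup, Module.Basis.mem_span_iff_repr_mem]
  simp [eq_comm]

/-- A level set of a nonzero linear form is null. -/
lemma null_level (L : (Fin 3 → ℝ) →ₗ[ℝ] ℝ) (hL : L ≠ 0) (r : ℝ) :
    volume {u : Fin 3 → ℝ | L u = r} = 0 := by
  rcases Set.eq_empty_or_nonempty {u : Fin 3 → ℝ | L u = r} with h | ⟨u₀, hu₀⟩
  · simp [h]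
  · simp only [Set.mem_setOf_eq] at hu₀
    have hs : {u : Fin 3 → ℝ | L u = r} = (fun w => -u₀ + w) ⁻¹' (LinearMap.ker L) := by
      ext x
      simp only [Set.mem_setOf_eq, Set.mem_preimage, SetLike.mem_coe, LinearMap.mem_ker,
        map_add, map_neg, hu₀]
      constructor
      · intro hx; rw [hx]; ring
      · intro hx; linarith
    rw [hs, measure_preimage_add]
    apply Measure.addHaar_submodule
    intro h
    exact hL (LinearMap.ker_eq_top.mp h)

lemma ae_ne_int (L : (Fin 3 → ℝ) →ₗ[ℝ] ℝ) (hL : L ≠ 0) :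
    ∀ᵐ u : Fin 3 → ℝ, ∀ m : ℤ, L u ≠ (m:ℝ) := by
  rw [MeasureTheory.ae_iff]
  have : {u : Fin 3 → ℝ | ¬∀ (m : ℤ), L u ≠ (m:ℝ)} = ⋃ m : ℤ, {u : Fin 3 → ℝ | L u = (m:ℝ)} := by
    ext u; simp
  rw [this]
  exact measure_iUnion_null fun m => null_level L hL m

-- linear forms
noncomputable def pr3 (i : Fin 3) : (Fin 3 → ℝ) →ₗ[ℝ] ℝ := LinearMap.proj i

lemma pr3_apply (i : Fin 3) (u : Fin 3 → ℝ) : pr3 i u = u i := rfl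

lemma form_ne_zero (i : Fin 3) (c : Fin 3 → ℝ) (hc : c i ≠ 0)
    (L : (Fin 3 → ℝ) →ₗ[ℝ] ℝ) (hL : ∀ u, L u = ∑ t, c t * u t) : L ≠ 0 := by
  intro h
  have := hL (Pi.single i 1)
  rw [h] at this
  simp [Pi.single_apply, Finset.sum_ite_eq, mul_comm] at this
  exact hc this.symm

lemma omega_fd : IsAddFundamentalDomain Lat3 OmegaH3 (volume : Measure (Fin 3 → ℝ)) := by
  have homega : OmegaH3 = {u : Fin 3 → ℝ | Pq (u 0) (u 1) (u 2)} := Set.ext mem_omega_iff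
  constructor
  · rw [homega]; exact measurable_pq.nullMeasurableSet
  · -- ae_covers
    have hD01 : (pr3 0 - pr3 1 : (Fin 3 → ℝ) →ₗ[ℝ] ℝ) ≠ 0 := by
      intro h
      have := congrArg (fun L : (Fin 3 → ℝ) →ₗ[ℝ] ℝ => L (Pi.single 0 1)) h
      simp [pr3] at this
    have hD02 : (pr3 0 - pr3 2 : (Fin 3 → ℝ) →ₗ[ℝ] ℝ) ≠ 0 := by
      intro h
      have := congrArg (fun L : (Fin 3 → ℝ) →ₗ[ℝ] ℝ => L (Pi.single 0 1)) h
      simp [pr3] at this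
    have hD12 : (pr3 1 - pr3 2 : (Fin 3 → ℝ) →ₗ[ℝ] ℝ) ≠ 0 := by
      intro h
      have := congrArg (fun L : (Fin 3 → ℝ) →ₗ[ℝ] ℝ => L (Pi.single 1 1)) h
      simp [pr3] at this
    have hS0 : (pr3 0 + pr3 0 + pr3 1 + pr3 2 : (Fin 3 → ℝ) →ₗ[ℝ] ℝ) ≠ 0 := by
      intro h
      have := congrArg (fun L : (Fin 3 → ℝ) →ₗ[ℝ] ℝ => L (Pi.single 1 1)) h
      simp [pr3] at this
    have hS1 : (pr3 0 + pr3 1 + pr3 1 + pr3 2 : (Fin 3 → ℝ) →ₗ[ℝ] ℝ) ≠ 0 := by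
      intro h
      have := congrArg (fun L : (Fin 3 → ℝ) →ₗ[ℝ] ℝ => L (Pi.single 0 1)) h
      simp [pr3] at this
    have hS2 : (pr3 0 + pr3 1 + pr3 2 + pr3 2 : (Fin 3 → ℝ) →ₗ[ℝ] ℝ) ≠ 0 := by
      intro h
      have := congrArg (fun L : (Fin 3 → ℝ) →ₗ[ℝ] ℝ => L (Pi.single 0 1)) h
      simp [pr3] at this
    filter_upwards [ae_ne_int _ hD01, ae_ne_int _ hD02, ae_ne_int _ hD12,
      ae_ne_int _ hS0, ae_ne_int _ hS1, ae_ne_int _ hS2] with u g01 g02 g12 gS0 gS1 gS2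
    simp only [pr3, LinearMap.sub_apply, LinearMap.add_apply, LinearMap.proj_apply] at g01 g02 g12 gS0 gS1 gS2
    -- fractional parts
    set v0 := Int.fract (u 0) with hv0
    set v1 := Int.fract (u 1) with hv1
    set v2 := Int.fract (u 2) with hv2
    have hIco : ∀ i : Fin 3, Int.fract (u i) ∈ Set.Ico (0:ℝ) 1 :=
      fun i => ⟨Int.fract_nonneg _, Int.fract_lt_one _⟩
    have hfr : ∀ i : Fin 3, Int.fract (u i) = u i - ⌊u i⌋ := fun i => Int.self_sub_floor (u i) ▸ rfl
    have d01 : v0 ≠ v1 := by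
      intro h
      apply g01 (⌊u 0⌋ - ⌊u 1⌋)
      rw [hv0, hv1] at h
      rw [Int.fract, Int.fract] at h
      push_cast
      linarith [h]
    have d02 : v0 ≠ v2 := by
      intro h
      apply g02 (⌊u 0⌋ - ⌊u 2⌋)
      rw [hv0, hv2] at h
      rw [Int.fract, Int.fract] at h
      push_cast
      linarith [h]
    have d12 : v1 ≠ v2 := by
      intro h
      apply g12 (⌊u 1⌋ - ⌊u 2⌋)
      rw [hv1, hv2] at h
      rw [Int.fract, Int.fract] at h
      push_cast
      linarith [h]
    have gA : ∀ m : ℤ, v0+v1+v2+v0 ≠ m := by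
      intro m h
      apply gS0 (m + (⌊u 0⌋ + ⌊u 0⌋ + ⌊u 1⌋ + ⌊u 2⌋))
      rw [hv0, hv1, hv2, Int.fract, Int.fract, Int.fract] at h
      push_cast
      linarith [h]
    have gB : ∀ m : ℤ, v0+v1+v2+v1 ≠ m := by
      intro m h
      apply gS1 (m + (⌊u 0⌋ + ⌊u 1⌋ + ⌊u 1⌋ + ⌊u 2⌋))
      rw [hv0, hv1, hv2, Int.fract, Int.fract, Int.fract] at h
      push_cast
      linarith [h]
    have gC : ∀ m : ℤ, v0+v1+v2+v2 ≠ m := by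
      intro m h
      apply gS2 (m + (⌊u 0⌋ + ⌊u 1⌋ + ⌊u 2⌋ + ⌊u 2⌋))
      rw [hv0, hv1, hv2, Int.fract, Int.fract, Int.fract] at h
      push_cast
      linarith [h]
    obtain ⟨e1, e2, e3, hq⟩ := covering_v (hIco 0) (hIco 1) (hIco 2) d01 d02 d12 gA gB gC
    -- the lattice element
    refine ⟨⟨fun i => ((-(⌊u i⌋ + (![e1,e2,e3] : Fin 3 → ℤ) i) : ℤ) : ℝ), ?_⟩, ?_⟩
    · rw [mem_Lat3]; exact fun i => ⟨_, rfl⟩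
    · have hvadd : ∀ x : Fin 3 → ℝ, ∀ (h : x ∈ Lat3), ((⟨x, h⟩ : Lat3) +ᵥ u) = x + u := fun _ _ => rfl
      rw [hvadd, mem_omega_iff]
      have E0 : ((-(⌊u 0⌋ + e1) : ℤ) : ℝ) + u 0 = v0 - e1 := by
        rw [hv0, Int.fract]; push_cast; ring
      have E1 : ((-(⌊u 1⌋ + e2) : ℤ) : ℝ) + u 1 = v1 - e2 := by
        rw [hv1, Int.fract]; push_cast; ring
      have E2 : ((-(⌊u 2⌋ + e3) : ℤ) : ℝ) + u 2 = v2 - e3 := by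
        rw [hv2, Int.fract]; push_cast; ring
      have : ∀ i : Fin 3, ((fun i => ((-(⌊u i⌋ + (![e1,e2,e3] : Fin 3 → ℤ) i) : ℤ) : ℝ)) + u) i
          = (![v0 - e1, v1 - e2, v2 - e3] : Fin 3 → ℝ) i := by
        intro i
        fin_cases i
        · simpa using E0
        · simpa using E1
        · simpa using E2
      rw [this 0, this 1, this 2]
      simpa using hq.toPq
  · -- aedisjoint
    intro g g' hne
    apply Disjoint.aedisjoint
    rw [Set.disjoint_left]
    intro x hx hx'
    rw [Set.mem_vadd_set] at hx hx'
    obtain ⟨w, hw, hwx⟩ := hx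
    obtain ⟨w', hw', hw'x⟩ := hx'
    obtain ⟨m, hm⟩ := Classical.axiomOfChoice (fun i => (mem_Lat3 _).mp g.2 i)
    obtain ⟨m', hm'⟩ := Classical.axiomOfChoice (fun i => (mem_Lat3 _).mp g'.2 i)
    have heq : (g : Fin 3 → ℝ) + w = (g' : Fin 3 → ℝ) + w' := by
      rw [show (g : Fin 3 → ℝ) + w = x from hwx, show (g' : Fin 3 → ℝ) + w' = x from hw'x]
    have hco : ∀ i : Fin 3, w i = w' i + ((m' i - m i : ℤ) : ℝ) := by
      intro i
      have h := congrFun heq i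
      simp only [Pi.add_apply, hm i, hm' i] at h
      push_cast
      linarith
    rw [mem_omega_iff] at hw hw'
    rw [hco 0, hco 1, hco 2] at hw
    obtain ⟨q0, q1, q2⟩ := uniq_int hw' hw
    apply hne
    apply Subtype.ext
    funext i
    rw [hm i, hm' i]
    have key : m' i - m i = 0 := by fin_cases i; exacts [q0, q1, q2]
    have : m i = m' i := by omega
    rw [this]

lemma cube_eq : ZSpan.fundamentalDomain bb = Set.univ.pi fun _ : Fin 3 => Set.Ico (0:ℝ) 1 := by
  ext u
  simp [ZSpan.fundamentalDomain]

lemma oneD (m : ℤ) :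
    ∫ x in Set.Ico (0:ℝ) 1, Complex.exp (2*(π:ℂ)*Complex.I*(m:ℂ)*(x:ℂ))
      = if m = 0 then 1 else 0 := by
  rw [setIntegral_congr_set Ico_ae_eq_Ioc,
    ← intervalIntegral.integral_of_le (zero_le_one)]
  by_cases hm : m = 0
  · simp [hm]
  · have hc : (2*(π:ℂ)*Complex.I*(m:ℂ)) ≠ 0 := by
      apply mul_ne_zero
      apply mul_ne_zero
      apply mul_ne_zero
      · norm_num
      · exact_mod_cast Real.pi_ne_zero
      · exact Complex.I_ne_zero
      · exact_mod_cast hm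
    rw [if_neg hm]
    have := integral_exp_mul_complex (a := 0) (b := 1) hc
    rw [show (fun x : ℝ => Complex.exp (2*(π:ℂ)*Complex.I*(m:ℂ)*(x:ℂ)))
      = fun x : ℝ => Complex.exp ((2*(π:ℂ)*Complex.I*(m:ℂ))*(x:ℂ)) from rfl, this]
    have h1 : Complex.exp (2*(π:ℂ)*Complex.I*(m:ℂ)*(1:ℝ)) = 1 := by
      rw [show (2*(π:ℂ)*Complex.I*(m:ℂ)*((1:ℝ):ℂ)) = (m:ℂ) * (2*(π:ℂ)*Complex.I) by
        push_cast; ring]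
      exact Complex.exp_int_mul_two_pi_mul_I m
    rw [h1]
    simp

lemma cube_int (N : Fin 3 → ℤ) :
    ∫ u in ZSpan.fundamentalDomain bb,
        Complex.exp (2*(π:ℂ)*Complex.I*(∑ i, (N i : ℂ) * (u i : ℂ)))
      = ∏ i, (if N i = 0 then (1:ℂ) else 0) := by
  rw [cube_eq]
  rw [← MeasureTheory.integral_indicator (MeasurableSet.univ_pi fun _ => measurableSet_Ico)]
  have hind : (Set.univ.pi fun _ : Fin 3 => Set.Ico (0:ℝ) 1).indicator
      (fun u => Complex.exp (2*(π:ℂ)*Complex.I*(∑ i, (N i : ℂ) * (u i : ℂ))))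
      = fun u : Fin 3 → ℝ => ∏ i : Fin 3,
          (Set.Ico (0:ℝ) 1).indicator (fun x : ℝ => Complex.exp (2*(π:ℂ)*Complex.I*(N i : ℂ)*(x:ℂ))) (u i) := by
    funext u
    by_cases hu : ∀ i, u i ∈ Set.Ico (0:ℝ) 1
    · rw [Set.indicator_of_mem (by simpa [Set.mem_pi] using hu)]
      rw [Finset.prod_congr rfl (fun i _ => Set.indicator_of_mem (hu i) _)]
      rw [← Complex.exp_sum]
      congr 1
      rw [Finset.mul_sum]
      exact Finset.sum_congr rfl fun i _ => by ring
    · push_neg at hu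
      obtain ⟨i, hi⟩ := hu
      rw [Set.indicator_of_notMem (by
        simp only [Set.mem_pi, Set.mem_univ, forall_true_left, not_forall]
        exact ⟨i, hi⟩)]
      rw [eq_comm]
      apply Finset.prod_eq_zero (Finset.mem_univ i)
      exact Set.indicator_of_notMem hi _
  rw [hind]
  rw [volume_pi, MeasureTheory.integral_fintype_prod_eq_prod (f := fun (i : Fin 3) (x : ℝ) =>
    (Set.Ico (0:ℝ) 1).indicator (fun x : ℝ => Complex.exp (2*(π:ℂ)*Complex.I*(N i : ℂ)*(x:ℂ))) x)]
  refine Finset.prod_congr rfl fun i _ => ?_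
  rw [MeasureTheory.integral_indicator measurableSet_Ico]
  exact oneD (N i)

lemma integrand_eq (k j : Fin 4 → ℤ) (n : Fin 3 → ℤ)
    (e0 : 4 * n 0 = k 0 - j 0 - (k 3 - j 3))
    (e1 : 4 * n 1 = k 1 - j 1 - (k 3 - j 3))
    (e2 : 4 * n 2 = k 2 - j 2 - (k 3 - j 3))
    (u : Fin 3 → ℝ) :
    phi k (emb u) * (starRingEnd ℂ) (phi j (emb u))
      = Complex.exp (2*(π:ℂ)*Complex.I*(∑ i, (n i : ℂ) * (u i : ℂ))) := by
  unfold phi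
  rw [← Complex.exp_conj, ← Complex.exp_add]
  congr 1
  have hconj : (starRingEnd ℂ) ((π : ℂ) * Complex.I / 2 * ∑ i, (j i : ℂ) * (emb u i : ℂ))
      = -((π : ℂ) * Complex.I / 2 * ∑ i, (j i : ℂ) * (emb u i : ℂ)) := by
    simp only [map_mul, map_div₀, map_sum, Complex.conj_I, Complex.conj_ofReal,
      map_intCast, map_ofNat]
    ring
  rw [hconj]
  have E0 : ((4 * n 0 : ℤ) : ℂ) = ((k 0 - j 0 - (k 3 - j 3) : ℤ) : ℂ) := by exact_mod_cast e0
  have E1 : ((4 * n 1 : ℤ) : ℂ) = ((k 1 - j 1 - (k 3 - j 3) : ℤ) : ℂ) := by exact_mod_cast e1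
  have E2 : ((4 * n 2 : ℤ) : ℂ) = ((k 2 - j 2 - (k 3 - j 3) : ℤ) : ℂ) := by exact_mod_cast e2
  push_cast at E0 E1 E2
  simp only [Fin.sum_univ_four, Fin.sum_univ_three, emb, Matrix.cons_val_zero,
    Matrix.cons_val_one, Matrix.head_cons, Matrix.cons_val_two, Matrix.tail_cons,
    Matrix.cons_val_three]
  push_cast
  linear_combination (-(π:ℂ) * Complex.I / 2 * (u 0 : ℂ)) * E0
    + (-(π:ℂ) * Complex.I / 2 * (u 1 : ℂ)) * E1
    + (-(π:ℂ) * Complex.I / 2 * (u 2 : ℂ)) * E2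

end aux

/-- Orthonormality of the exponentials φ_j, j ∈ ℍ, on Ω_H; the surface measure on the
hyperplane is 2·(Lebesgue measure in the coordinates (t₁,t₂,t₃)), and |Ω_H| = 2. -/
theorem stmt6 (k j : Fin 4 → ℤ) (hk : k ∈ Hidx) (hj : j ∈ Hidx) :
    (1 / 2 : ℂ) * ∫ u in OmegaH3,
        phi k (emb u) * (starRingEnd ℂ) (phi j (emb u))
          ∂((2 : ℝ≥0∞) • (volume : Measure (Fin 3 → ℝ))) =
      if k = j then 1 else 0 := by
  obtain ⟨hk1, hk2⟩ := hk
  obtain ⟨hj1, hj2⟩ := hj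
  rw [Fin.sum_univ_four] at hk1 hj1
  -- divisibility
  have c0 : (4:ℤ) ∣ (k 0 - j 0 - (k 3 - j 3)) := by
    have h1 := hk2 0 3; have h2 := hj2 0 3; omega
  have c1 : (4:ℤ) ∣ (k 1 - j 1 - (k 3 - j 3)) := by
    have h1 := hk2 1 3; have h2 := hj2 1 3; omega
  have c2 : (4:ℤ) ∣ (k 2 - j 2 - (k 3 - j 3)) := by
    have h1 := hk2 2 3; have h2 := hj2 2 3; omega
  set n : Fin 3 → ℤ := ![(k 0 - j 0 - (k 3 - j 3))/4, (k 1 - j 1 - (k 3 - j 3))/4,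
    (k 2 - j 2 - (k 3 - j 3))/4] with hn
  have e0 : 4 * n 0 = k 0 - j 0 - (k 3 - j 3) := by
    show 4 * ((k 0 - j 0 - (k 3 - j 3))/4) = _; omega
  have e1 : 4 * n 1 = k 1 - j 1 - (k 3 - j 3) := by
    show 4 * ((k 1 - j 1 - (k 3 - j 3))/4) = _; omega
  have e2 : 4 * n 2 = k 2 - j 2 - (k 3 - j 3) := by
    show 4 * ((k 2 - j 2 - (k 3 - j 3))/4) = _; omega
  -- invariance
  have hinv : ∀ (g : Lat3) (x : Fin 3 → ℝ),
      Complex.exp (2*(π:ℂ)*Complex.I*(∑ i, (n i : ℂ) * (((g +ᵥ x) i : ℝ) : ℂ)))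
        = Complex.exp (2*(π:ℂ)*Complex.I*(∑ i, (n i : ℂ) * ((x i : ℝ) : ℂ))) := by
    intro g x
    obtain ⟨m, hm⟩ := Classical.axiomOfChoice ((mem_Lat3 _).mp g.2)
    have hg : ∀ i, (g +ᵥ x) i = (m i : ℝ) + x i := fun i => by
      show (g : Fin 3 → ℝ) i + x i = _
      rw [hm i]
    simp only [Fin.sum_univ_three, hg]
    rw [show (2*(π:ℂ)*Complex.I*((n 0:ℂ)*((((m 0:ℝ) + x 0) : ℝ):ℂ) + (n 1:ℂ)*((((m 1:ℝ) + x 1) : ℝ):ℂ)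
          + (n 2:ℂ)*((((m 2:ℝ) + x 2) : ℝ):ℂ)))
        = 2*(π:ℂ)*Complex.I*((n 0:ℂ)*((x 0 : ℝ):ℂ) + (n 1:ℂ)*((x 1 : ℝ):ℂ) + (n 2:ℂ)*((x 2 : ℝ):ℂ))
          + ((n 0 * m 0 + n 1 * m 1 + n 2 * m 2 : ℤ):ℂ) * (2*(π:ℂ)*Complex.I) by push_cast; ring]
    rw [Complex.exp_add, Complex.exp_int_mul_two_pi_mul_I, mul_one]
  -- rewrite the measure and integrand
  rw [Measure.restrict_smul, integral_smul_measure]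
  simp only [integrand_eq k j n e0 e1 e2]
  rw [omega_fd.setIntegral_eq (ZSpan.isAddFundamentalDomain' bb volume) hinv]
  rw [cube_int n]
  rw [show ((2:ℝ≥0∞)).toReal = (2:ℝ) by simp]
  by_cases hkj : k = j
  · subst hkj
    have hn0 : n 0 = 0 := by omega
    have hn1 : n 1 = 0 := by omega
    have hn2 : n 2 = 0 := by omega
    rw [if_pos rfl]
    rw [Fin.prod_univ_three, if_pos hn0, if_pos hn1, if_pos hn2]
    rw [Complex.real_smul]
    norm_num
  · rw [if_neg hkj]
    have hnz : ¬(n 0 = 0 ∧ n 1 = 0 ∧ n 2 = 0) := by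
      rintro ⟨h0, h1, h2⟩
      apply hkj
      have q0 : k 0 = j 0 := by omega
      have q1 : k 1 = j 1 := by omega
      have q2 : k 2 = j 2 := by omega
      have q3 : k 3 = j 3 := by omega
      funext i
      fin_cases i
      exacts [q0, q1, q2, q3]
    rw [Fin.prod_univ_three]
    rcases not_and_or.mp hnz with h | h
    · rw [if_neg h]
      simp
    · rcases not_and_or.mp h with h' | h'
      · rw [if_neg h']
        simp
      · rw [if_neg h']
        simp
end

section
/- The cardinality of ℍ_n^* = {k ∈ ℤ⁴ : k₁+k₂+k₃+k₄ = 0, k₁≡k₂≡k₃≡k₄ (mod 4), and -4n ≤ k_i - k_j ≤ 4n for all 1 ≤ i < j ≤ 4} equals (n+1)⁴ - n⁴. -/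
set_option maxHeartbeats 1000000

/-- The finite symmetric index set ℍ_n^*. -/
noncomputable def HstarF (n : ℕ) : Finset (Fin 4 → ℤ) :=
  (Finset.Icc (fun _ : Fin 4 => -(3 * (n : ℤ))) (fun _ : Fin 4 => 3 * (n : ℤ))).filter
    (fun k => (∑ i, k i) = 0 ∧ (∀ i j : Fin 4, k i % 4 = k j % 4) ∧
      ∀ i j : Fin 4, -(4 * (n : ℤ)) ≤ k i - k j ∧ k i - k j ≤ 4 * (n : ℤ))

theorem stmt10 (n : ℕ) : (HstarF n).card = (n + 1) ^ 4 - n ^ 4 := by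
  classical
  set S : Finset (Fin 4 → ℤ) :=
    Finset.Icc (fun _ => 0) (fun _ => (n : ℤ)) \ Finset.Icc (fun _ => 1) (fun _ => (n : ℤ))
    with hS
  have hSmem : ∀ m : Fin 4 → ℤ, m ∈ S ↔
      ((∀ i, 0 ≤ m i) ∧ (∀ i, m i ≤ (n : ℤ)) ∧ ∃ i, m i = 0) := by
    intro m
    rw [hS, Finset.mem_sdiff, Finset.mem_Icc, Finset.mem_Icc]
    simp only [Pi.le_def]
    constructor
    · rintro ⟨⟨h0, h1⟩, h2⟩
      refine ⟨h0, h1, ?_⟩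
      by_contra hc
      push_neg at hc
      exact h2 ⟨fun i => by have := h0 i; have := hc i; omega, h1⟩
    · rintro ⟨h0, h1, i, hi⟩
      exact ⟨⟨h0, h1⟩, fun h => by have := h.1 i; omega⟩
  have hHmem : ∀ k : Fin 4 → ℤ, k ∈ HstarF n ↔
      ((∀ i, -(3 * (n : ℤ)) ≤ k i) ∧ (∀ i, k i ≤ 3 * (n : ℤ)) ∧
        k 0 + k 1 + k 2 + k 3 = 0 ∧ (∀ i j : Fin 4, k i % 4 = k j % 4) ∧
        ∀ i j : Fin 4, -(4 * (n : ℤ)) ≤ k i - k j ∧ k i - k j ≤ 4 * (n : ℤ)) := by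
    intro k
    simp only [HstarF, Finset.mem_filter, Finset.mem_Icc, Pi.le_def, Fin.sum_univ_four]
    tauto
  have hcardS : S.card = (n + 1) ^ 4 - n ^ 4 := by
    rw [hS, Finset.card_sdiff_of_subset (Finset.Icc_subset_Icc (fun i => by norm_num) le_rfl)]
    rw [Pi.card_Icc, Pi.card_Icc]
    simp [Int.card_Icc]
  rw [← hcardS]
  symm
  apply Finset.card_bij (fun m _ => fun i => 4 * m i - (m 0 + m 1 + m 2 + m 3))
  · intro m hm
    rw [hSmem] at hm
    obtain ⟨hb0, hbn, i0, hi0⟩ := hm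
    have h0 := hb0 0; have h1 := hb0 1; have h2 := hb0 2; have h3 := hb0 3
    have g0 := hbn 0; have g1 := hbn 1; have g2 := hbn 2; have g3 := hbn 3
    rw [hHmem]
    refine ⟨fun i => ?_, fun i => ?_, by ring, fun i j => ?_, fun i j => ?_⟩
    · fin_cases i <;> simp <;> omega
    · fin_cases i <;> simp <;> omega
    · fin_cases i <;> fin_cases j <;> simp <;> omega
    · fin_cases i <;> fin_cases j <;> simp <;> omega
  · intro a ha b hb hab
    rw [hSmem] at ha hb
    obtain ⟨ha0, han, i, hi⟩ := ha
    obtain ⟨hb0, hbn, j, hj⟩ := hb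
    have e0 := congrFun hab 0
    have e1 := congrFun hab 1
    have e2 := congrFun hab 2
    have e3 := congrFun hab 3
    have hza : a 0 = 0 ∨ a 1 = 0 ∨ a 2 = 0 ∨ a 3 = 0 := by
      fin_cases i
      exacts [Or.inl hi, Or.inr (Or.inl hi), Or.inr (Or.inr (Or.inl hi)),
        Or.inr (Or.inr (Or.inr hi))]
    have hzb : b 0 = 0 ∨ b 1 = 0 ∨ b 2 = 0 ∨ b 3 = 0 := by
      fin_cases j
      exacts [Or.inl hj, Or.inr (Or.inl hj), Or.inr (Or.inr (Or.inl hj)),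
        Or.inr (Or.inr (Or.inr hj))]
    have A0 := ha0 0; have A1 := ha0 1; have A2 := ha0 2; have A3 := ha0 3
    have B0 := hb0 0; have B1 := hb0 1; have B2 := hb0 2; have B3 := hb0 3
    funext x
    fin_cases x
    · show a 0 = b 0; omega
    · show a 1 = b 1; omega
    · show a 2 = b 2; omega
    · show a 3 = b 3; omega
  · intro k hk
    rw [hHmem] at hk
    obtain ⟨hbl, hbu, hsum, hmod, hdiff⟩ := hk
    set μ := min (min (k 0) (k 1)) (min (k 2) (k 3)) with hμ
    have hl0 : μ ≤ k 0 := le_trans (min_le_left _ _) (min_le_left _ _)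
    have hl1 : μ ≤ k 1 := le_trans (min_le_left _ _) (min_le_right _ _)
    have hl2 : μ ≤ k 2 := le_trans (min_le_right _ _) (min_le_left _ _)
    have hl3 : μ ≤ k 3 := le_trans (min_le_right _ _) (min_le_right _ _)
    have hcase : μ = k 0 ∨ μ = k 1 ∨ μ = k 2 ∨ μ = k 3 := by
      rw [hμ]
      rcases min_cases (min (k 0) (k 1)) (min (k 2) (k 3)) with ⟨h,_⟩|⟨h,_⟩ <;> rw [h]
      · rcases min_cases (k 0) (k 1) with ⟨h',_⟩|⟨h',_⟩ <;> rw [h'] <;> tauto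
      · rcases min_cases (k 2) (k 3) with ⟨h',_⟩|⟨h',_⟩ <;> rw [h'] <;> tauto
    have hm01 := hmod 0 1; have hm02 := hmod 0 2; have hm03 := hmod 0 3
    have hd01 := hdiff 0 1; have hd02 := hdiff 0 2; have hd03 := hdiff 0 3
    have hd12 := hdiff 1 2; have hd13 := hdiff 1 3; have hd23 := hdiff 2 3
    have hd10 := hdiff 1 0; have hd20 := hdiff 2 0; have hd30 := hdiff 3 0
    have hd21 := hdiff 2 1; have hd31 := hdiff 3 1; have hd32 := hdiff 3 2
    refine ⟨fun i => (k i - μ) / 4, ?_, ?_⟩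
    · rw [hSmem]
      refine ⟨fun i => ?_, fun i => ?_, ?_⟩
      · fin_cases i <;> simp <;> rcases hcase with h|h|h|h <;> omega
      · fin_cases i <;> simp <;> rcases hcase with h|h|h|h <;> omega
      · rcases hcase with h|h|h|h
        · exact ⟨0, by show (k 0 - μ) / 4 = 0; omega⟩
        · exact ⟨1, by show (k 1 - μ) / 4 = 0; omega⟩
        · exact ⟨2, by show (k 2 - μ) / 4 = 0; omega⟩
        · exact ⟨3, by show (k 3 - μ) / 4 = 0; omega⟩
    · funext i
      simp only
      fin_cases i <;> simp <;> rcases hcase with h|h|h|h <;> omega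
end

section
/- For n ≥ 1, the interior index set ℍ_n^∘ = {k ∈ ℍ : -4n < k_i - k_j < 4n for all i ≠ j} has cardinality n⁴ - (n-1)⁴, where ℍ = {k ∈ ℤ⁴ : Σk_i = 0, k₁≡k₂≡k₃≡k₄ (mod 4)}. -/
/-- The interior index set ℍ_n^∘ = {k ∈ ℍ : -4n < k_i - k_j < 4n for i ≠ j};
the constraints force each |k_i| ≤ 3n, so it is realized as a filtered box. -/
noncomputable def HintF (n : ℕ) : Finset (Fin 4 → ℤ) :=
  (Finset.Icc (fun _ : Fin 4 => -(3 * (n : ℤ))) (fun _ : Fin 4 => 3 * (n : ℤ))).filter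
    (fun k => (∑ i, k i) = 0 ∧ (∀ i j : Fin 4, k i % 4 = k j % 4) ∧
      ∀ i j : Fin 4, i ≠ j → -(4 * (n : ℤ)) < k i - k j ∧ k i - k j < 4 * (n : ℤ))

/-- Minimum of the four coordinates. -/
def mink (k : Fin 4 → ℤ) : ℤ := min (min (k 0) (k 1)) (min (k 2) (k 3))

/-- Forward map: `x i = (k i - min k) / 4`. -/
def fwd (k : Fin 4 → ℤ) : Fin 4 → ℤ := fun i => (k i - mink k) / 4

/-- Backward map: `k i = 4 x i - ∑ x j`. -/
def bwd (x : Fin 4 → ℤ) : Fin 4 → ℤ := fun i => 4 * x i - (x 0 + x 1 + x 2 + x 3)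

/-- The target set: boxes `[0, n-1]⁴` with some coordinate equal to `0`. -/
noncomputable def TF (n : ℕ) : Finset (Fin 4 → ℤ) :=
  (Finset.Icc (0 : Fin 4 → ℤ) (fun _ => (n : ℤ) - 1)).filter (fun x => ∃ i, x i = 0)

lemma fwd_mem_TF (n : ℕ) (k : Fin 4 → ℤ) (hk : k ∈ HintF n) : fwd k ∈ TF n := by
  simp only [HintF, Finset.mem_filter, Finset.mem_Icc, Pi.le_def] at hk
  obtain ⟨⟨h1, h2⟩, hsum, hmod, hd⟩ := hk
  rw [Fin.sum_univ_four] at hsum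
  have m01 := hmod 0 1
  have m02 := hmod 0 2
  have m03 := hmod 0 3
  have d01 := hd 0 1 (by decide)
  have d02 := hd 0 2 (by decide)
  have d03 := hd 0 3 (by decide)
  have d12 := hd 1 2 (by decide)
  have d13 := hd 1 3 (by decide)
  have d23 := hd 2 3 (by decide)
  simp only [TF, Finset.mem_filter, Finset.mem_Icc, Pi.le_def, fwd, mink, Pi.zero_apply]
  refine ⟨⟨fun i => ?_, fun i => ?_⟩, ?_⟩
  · fin_cases i <;> simp <;> omega
  · fin_cases i <;> simp <;> omega
  · have : (k 0 - min (min (k 0) (k 1)) (min (k 2) (k 3))) / 4 = 0 ∨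
      (k 1 - min (min (k 0) (k 1)) (min (k 2) (k 3))) / 4 = 0 ∨
      (k 2 - min (min (k 0) (k 1)) (min (k 2) (k 3))) / 4 = 0 ∨
      (k 3 - min (min (k 0) (k 1)) (min (k 2) (k 3))) / 4 = 0 := by omega
    rcases this with h | h | h | h
    exacts [⟨0, h⟩, ⟨1, h⟩, ⟨2, h⟩, ⟨3, h⟩]

lemma bwd_mem_HintF (n : ℕ) (hn : 1 ≤ n) (x : Fin 4 → ℤ) (hx : x ∈ TF n) :
    bwd x ∈ HintF n := by
  simp only [TF, Finset.mem_filter, Finset.mem_Icc, Pi.le_def, Pi.zero_apply] at hx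
  obtain ⟨⟨h1, h2⟩, i0, hi0⟩ := hx
  have e0 := h1 0; have e1 := h1 1; have e2 := h1 2; have e3 := h1 3
  have f0 := h2 0; have f1 := h2 1; have f2 := h2 2; have f3 := h2 3
  simp only [HintF, Finset.mem_filter, Finset.mem_Icc, Pi.le_def, bwd]
  refine ⟨⟨fun i => ?_, fun i => ?_⟩, ?_, fun i j => ?_, fun i j hij => ?_⟩
  · fin_cases i <;> simp <;> omega
  · fin_cases i <;> simp <;> omega
  · rw [Fin.sum_univ_four]; ring
  · fin_cases i <;> fin_cases j <;> simp <;> omega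
  · fin_cases i <;> fin_cases j <;> first | (exact absurd rfl hij) | (simp; omega)

lemma bwd_fwd (n : ℕ) (k : Fin 4 → ℤ) (hk : k ∈ HintF n) : bwd (fwd k) = k := by
  simp only [HintF, Finset.mem_filter, Finset.mem_Icc, Pi.le_def] at hk
  obtain ⟨⟨h1, h2⟩, hsum, hmod, hd⟩ := hk
  rw [Fin.sum_univ_four] at hsum
  have m01 := hmod 0 1; have m02 := hmod 0 2; have m03 := hmod 0 3
  funext i
  fin_cases i <;> simp [bwd, fwd, mink] <;> omega

lemma fwd_bwd (n : ℕ) (x : Fin 4 → ℤ) (hx : x ∈ TF n) : fwd (bwd x) = x := by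
  simp only [TF, Finset.mem_filter, Finset.mem_Icc, Pi.le_def, Pi.zero_apply] at hx
  obtain ⟨⟨h1, h2⟩, i0, hi0⟩ := hx
  have e0 := h1 0; have e1 := h1 1; have e2 := h1 2; have e3 := h1 3
  have hz : x 0 = 0 ∨ x 1 = 0 ∨ x 2 = 0 ∨ x 3 = 0 := by
    fin_cases i0 <;> simp_all
  funext i
  fin_cases i <;> simp [bwd, fwd, mink] <;> omega

lemma card_TF (n : ℕ) (hn : 1 ≤ n) : (TF n).card = n ^ 4 - (n - 1) ^ 4 := by
  have hbox : (Finset.Icc (0 : Fin 4 → ℤ) (fun _ => (n : ℤ) - 1)).card = n ^ 4 := by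
    rw [Pi.card_Icc]
    simp [Int.card_Icc]
  have hneg : ((Finset.Icc (0 : Fin 4 → ℤ) (fun _ => (n : ℤ) - 1)).filter
      (fun x => ¬ ∃ i, x i = 0)).card = (n - 1) ^ 4 := by
    have : (Finset.Icc (0 : Fin 4 → ℤ) (fun _ => (n : ℤ) - 1)).filter
        (fun x => ¬ ∃ i, x i = 0) = Finset.Icc (1 : Fin 4 → ℤ) (fun _ => (n : ℤ) - 1) := by
      ext x
      simp only [Finset.mem_filter, Finset.mem_Icc, Pi.le_def, Pi.zero_apply, Pi.one_apply,
        not_exists]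
      constructor
      · rintro ⟨⟨h1, h2⟩, h3⟩
        exact ⟨fun i => by have := h1 i; have := h3 i; omega, h2⟩
      · rintro ⟨h1, h2⟩
        exact ⟨⟨fun i => by have := h1 i; omega, h2⟩, fun i => by have := h1 i; omega⟩
    rw [this, Pi.card_Icc]
    have h1 : ((n:ℤ) - 1 + 1 - 1).toNat = n - 1 := by omega
    simp [Int.card_Icc, h1]
  have key : (TF n).card +
      ((Finset.Icc (0 : Fin 4 → ℤ) (fun _ => (n : ℤ) - 1)).filter
        (fun x => ¬ ∃ i, x i = 0)).card =
      (Finset.Icc (0 : Fin 4 → ℤ) (fun _ => (n : ℤ) - 1)).card :=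
    Finset.card_filter_add_card_filter_not _
  have hle : (n - 1) ^ 4 ≤ n ^ 4 := Nat.pow_le_pow_left (Nat.sub_le n 1) 4
  rw [hbox, hneg] at key
  clear hbox hneg
  omega

theorem stmt13 (n : ℕ) (hn : 1 ≤ n) : (HintF n).card = n ^ 4 - (n - 1) ^ 4 := by
  rw [← card_TF n hn]
  exact Finset.card_bij' (fun k _ => fwd k) (fun x _ => bwd x)
    (fun k hk => fwd_mem_TF n k hk) (fun x hx => bwd_mem_HintF n hn x hx)
    (fun k hk => bwd_fwd n k hk) (fun x hx => fwd_bwd n x hx)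
end
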